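/- For a symmetric positive semidefinite matrix X ∈ R^{m×m}, it holds that tr(X^{1/2}) ≤ Σ_{j=1}^m sqrt(X_{j,j}), i.e., the trace of the matrix square root of X is at most the sum of the square roots of the diagonal entries of X. -/

import Mathlib

open Matrix
open scoped Classical

/-- The positive semidefinite square root of a positive semidefinite real matrix
(junk value `0` if the matrix is not positive semidefinite). -/
noncomputable def psdSqrt {k : ℕ} (X : Matrix (Fin k) (Fin k) ℝ) : Matrix (Fin k) (Fin k) ℝ :=
  if h : X.PosSemidef then
    (h.1.eigenvectorUnitary : Matrix (Fin k) (Fin k) ℝ) *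
      diagonal ((↑) ∘ (√·) ∘ h.1.eigenvalues) *
      (star h.1.eigenvectorUnitary : Matrix (Fin k) (Fin k) ℝ)
  else 0

/-- for a symmetric positive semidefinite matrix `X ∈ ℝ^{m×m}`,
`tr(X^{1/2}) ≤ ∑_{j=1}^m sqrt(X_{j,j})`. -/
theorem stmt6 (m : ℕ) (X : Matrix (Fin m) (Fin m) ℝ) (hX : X.PosSemidef) :
    (psdSqrt X).trace ≤ ∑ j, Real.sqrt (X j j) := by
  rw [psdSqrt, dif_pos hX, Matrix.trace]
  set U : Matrix (Fin m) (Fin m) ℝ := (hX.1.eigenvectorUnitary : Matrix (Fin m) (Fin m) ℝ) with hU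
  set S := U * diagonal ((↑) ∘ (√·) ∘ hX.1.eigenvalues) *
      (star hX.1.eigenvectorUnitary : Matrix (Fin m) (Fin m) ℝ) with hSdef
  have hUU : (star hX.1.eigenvectorUnitary : Matrix (Fin m) (Fin m) ℝ) * U = 1 := by
    rw [hU]; simp
  have hS : S.PosSemidef := by
    have hD : (diagonal ((↑) ∘ (√·) ∘ hX.1.eigenvalues) : Matrix (Fin m) (Fin m) ℝ).PosSemidef :=
      posSemidef_diagonal_iff.mpr (fun i => by simp [Real.sqrt_nonneg])
    have := hD.mul_mul_conjTranspose_same U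
    rw [hSdef]
    exact this
  have hSS : S * S = X := by
    conv_rhs => rw [hX.1.spectral_theorem, Unitary.conjStarAlgAut_apply]
    rw [hSdef]
    simp only [Matrix.mul_assoc]
    rw [← Matrix.mul_assoc (star hX.1.eigenvectorUnitary : Matrix (Fin m) (Fin m) ℝ) U, hUU,
      Matrix.one_mul, ← Matrix.mul_assoc (diagonal _), diagonal_mul_diagonal]
    congr 3
    funext i
    simp [Real.mul_self_sqrt (hX.eigenvalues_nonneg i)]
  apply Finset.sum_le_sum
  intro j _
  have hdiag : 0 ≤ S j j := hS.diag_nonneg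
  have hXdiag : X j j = ∑ k, S j k * S j k := by
    conv_lhs => rw [← hSS]
    simp only [Matrix.mul_apply, ← hSdef]
    refine Finset.sum_congr rfl fun k _ => ?_
    have hsym : S k j = S j k := by
      have := hS.1.apply j k
      simpa using this
    rw [hsym]
  have hsq : (S j j) ^ 2 ≤ X j j := by
    rw [hXdiag]
    have := Finset.single_le_sum (f := fun k => S j k * S j k)
      (fun k _ => mul_self_nonneg _) (Finset.mem_univ j)
    rw [sq]; simpa using this
  calc Matrix.diag S j = S j j := rfl
    _ ≤ Real.sqrt (X j j) := by
        have hXjj : 0 ≤ X j j := hX.diag_nonneg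
        exact (Real.le_sqrt hdiag hXjj).mpr hsq
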